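/- Let Ω ⊂ ℝ be a bounded open interval and φ ∈ C¹(closure Ω) positive on closure Ω. Then −∫_Ω ln φ ≤ |Ω|^{3/2} (∫_Ω (φ')²/φ²)^{1/2} − |Ω| ln(∫_Ω φ) + |Ω| ln |Ω|. -/

import Mathlib

open MeasureTheory Set

/-- For a positive `C¹` function `φ` on a bounded interval:
`-∫ ln φ ≤ |Ω|^{3/2}(∫ (φ')²/φ²)^{1/2} - |Ω| ln(∫ φ) + |Ω| ln |Ω|`. -/
theorem stmt_8 (a b : ℝ) (hab : a < b) (φ : ℝ → ℝ)
    (hφ : ContDiffOn ℝ 1 φ (Set.Icc a b))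
    (hpos : ∀ x ∈ Set.Icc a b, 0 < φ x) :
    -∫ x in Set.Ioo a b, Real.log (φ x)
      ≤ (b - a) ^ ((3:ℝ)/2)
            * (∫ x in Set.Ioo a b, (deriv φ x) ^ 2 / (φ x) ^ 2) ^ ((1:ℝ)/2)
        - (b - a) * Real.log (∫ x in Set.Ioo a b, φ x)
        + (b - a) * Real.log (b - a) := by
  have hL : 0 < b - a := sub_pos.2 hab
  set Ω : Set ℝ := Set.Ioo a b with hΩdef
  have hvol : (volume Ω).toReal = b - a := by
    simp [hΩdef, Real.volume_Ioo, ENNReal.toReal_ofReal hL.le]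
  have hvolfin : volume Ω < ⊤ := by
    simp [hΩdef, Real.volume_Ioo]
  have hIccU : UniqueDiffOn ℝ (Set.Icc a b) := uniqueDiffOn_Icc hab
  set G : ℝ → ℝ := fun x => derivWithin φ (Set.Icc a b) x / φ x with hGdef
  have hGcont : ContinuousOn G (Set.Icc a b) :=
    (hφ.continuousOn_derivWithin hIccU le_rfl).div hφ.continuousOn
      (fun x hx => (hpos x hx).ne')
  have hφd : ∀ t ∈ Ω, HasDerivAt φ (deriv φ t) t := by
    intro t ht
    have h1 : Set.Icc a b ∈ nhds t := Icc_mem_nhds ht.1 ht.2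
    exact (((hφ.differentiableOn one_ne_zero) t (Set.Ioo_subset_Icc_self ht)).differentiableAt
      h1).hasDerivAt
  have hGeq : ∀ t ∈ Ω, G t = deriv φ t / φ t := by
    intro t ht
    simp only [hGdef]
    rw [derivWithin_of_mem_nhds (Icc_mem_nhds ht.1 ht.2)]
  have hlogd : ∀ t ∈ Ω, HasDerivAt (fun y => Real.log (φ y)) (G t) t := by
    intro t ht
    rw [hGeq t ht]
    exact (hφd t ht).log (hpos t (Set.Ioo_subset_Icc_self ht)).ne'
  have hGint : IntegrableOn G (Set.Icc a b) := hGcont.integrableOn_Icc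
  have hGabsint : IntegrableOn (fun t => |G t|) (Set.Ioc a b) :=
    (hGint.mono_set Set.Ioc_subset_Icc_self).abs
  -- FTC on subintervals
  have key : ∀ c ∈ Set.Icc a b, ∀ d ∈ Set.Icc a b, c ≤ d →
      Real.log (φ d) - Real.log (φ c) = ∫ t in c..d, G t := by
    intro c hc d hd hcd
    have hsub : Set.Icc c d ⊆ Set.Icc a b := Set.Icc_subset_Icc hc.1 hd.2
    have hcont : ContinuousOn (fun y => Real.log (φ y)) (Set.Icc c d) :=
      ContinuousOn.log (hφ.continuousOn.mono hsub) (fun x hx => (hpos x (hsub hx)).ne')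
    have hderiv : ∀ x ∈ Set.Ioo c d,
        HasDerivWithinAt (fun y => Real.log (φ y)) (G x) (Set.Ioi x) x := by
      intro x hx
      exact (hlogd x (Set.Ioo_subset_Ioo hc.1 hd.2 hx)).hasDerivWithinAt
    have hint : IntervalIntegrable G volume c d :=
      (intervalIntegrable_iff_integrableOn_Icc_of_le hcd).2 (hGint.mono_set hsub)
    rw [intervalIntegral.integral_eq_sub_of_hasDeriv_right_of_le hcd hcont hderiv hint]
  -- extreme points
  obtain ⟨x₀, hx₀, hmax⟩ :=
    isCompact_Icc.exists_isMaxOn (Set.nonempty_Icc.2 hab.le) hφ.continuousOn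
  obtain ⟨x₁, hx₁, hmin⟩ :=
    isCompact_Icc.exists_isMinOn (Set.nonempty_Icc.2 hab.le) hφ.continuousOn
  have hφx₀ : 0 < φ x₀ := hpos x₀ hx₀
  set I : ℝ := ∫ x in Ω, φ x with hIdef
  have hφint : IntegrableOn φ Ω :=
    (hφ.continuousOn.integrableOn_Icc).mono_set Set.Ioo_subset_Icc_self
  have hconst : ∀ c : ℝ, IntegrableOn (fun _ : ℝ => c) Ω := by
    intro c
    exact integrableOn_const hvolfin.ne
  have hIle : I ≤ (b - a) * φ x₀ := by
    have h1 : I ≤ ∫ _x in Ω, φ x₀ :=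
      setIntegral_mono_on hφint (hconst _) measurableSet_Ioo
        (fun x hx => hmax (Set.Ioo_subset_Icc_self hx))
    rwa [setIntegral_const, measureReal_def, hvol, smul_eq_mul] at h1
  have hIpos : 0 < I := by
    have h1 : ∫ _x in Ω, φ x₁ ≤ I :=
      setIntegral_mono_on (hconst _) hφint measurableSet_Ioo
        (fun x hx => hmin (Set.Ioo_subset_Icc_self hx))
    rw [setIntegral_const, measureReal_def, hvol, smul_eq_mul] at h1
    exact lt_of_lt_of_le (mul_pos hL (hpos x₁ hx₁)) h1
  set A : ℝ := ∫ t in Ω, |G t| with hAdef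
  -- pointwise bound via FTC
  have hAbound : ∀ x ∈ Ω, Real.log (φ x₀) - Real.log (φ x) ≤ A := by
    intro x hx
    have hxIcc : x ∈ Set.Icc a b := Set.Ioo_subset_Icc_self hx
    have habs : |Real.log (φ x₀) - Real.log (φ x)| ≤ A := by
      have hmono : ∀ c d : ℝ, a ≤ c → d ≤ b → c ≤ d →
          |∫ t in c..d, G t| ≤ A := by
        intro c d hac hdb hcd
        calc |∫ t in c..d, G t| ≤ ∫ t in c..d, |G t| :=
              intervalIntegral.abs_integral_le_integral_abs hcd
          _ = ∫ t in Set.Ioc c d, |G t| := intervalIntegral.integral_of_le hcd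
          _ ≤ ∫ t in Set.Ioc a b, |G t| :=
              setIntegral_mono_set hGabsint
                (Filter.Eventually.of_forall fun t => abs_nonneg _)
                ((Set.Ioc_subset_Ioc hac hdb).eventuallyLE)
          _ = A := integral_Ioc_eq_integral_Ioo
      rcases le_total x x₀ with h | h
      · rw [key x hxIcc x₀ hx₀ h]
        exact hmono x x₀ hxIcc.1 hx₀.2 h
      · rw [abs_sub_comm, key x₀ hx₀ x hxIcc h]
        exact hmono x₀ x hx₀.1 hxIcc.2 h
    exact le_trans (le_abs_self _) habs
  -- Cauchy–Schwarz
  haveI hfin : IsFiniteMeasure (volume.restrict Ω) :=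
    ⟨by rwa [Measure.restrict_apply_univ]⟩
  have hGmeas : AEStronglyMeasurable G (volume.restrict Ω) :=
    (hGcont.mono Set.Ioo_subset_Icc_self).aestronglyMeasurable measurableSet_Ioo
  obtain ⟨C, hC⟩ := isCompact_Icc.exists_bound_of_continuousOn hGcont
  have hmem : MemLp (fun t => |G t|) (ENNReal.ofReal 2) (volume.restrict Ω) := by
    refine MemLp.of_bound (hGmeas.norm.congr (Filter.Eventually.of_forall fun t => (Real.norm_eq_abs (G t)))) C ?_
    refine (ae_restrict_iff' measurableSet_Ioo).2 (Filter.Eventually.of_forall fun t ht => ?_)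
    simpa [Real.norm_eq_abs, abs_abs] using hC t (Set.Ioo_subset_Icc_self ht)
  have hone : MemLp (fun _ : ℝ => (1:ℝ)) (ENNReal.ofReal 2) (volume.restrict Ω) :=
    memLp_const 1
  have hpq : (2:ℝ).HolderConjugate 2 := Real.holderConjugate_iff.2 ⟨by norm_num, by norm_num⟩
  have hCS := integral_mul_le_Lp_mul_Lq_of_nonneg hpq
    (Filter.Eventually.of_forall fun t => abs_nonneg (G t))
    (Filter.Eventually.of_forall fun _ => zero_le_one) hmem hone
  have hsq : ∀ t : ℝ, |G t| ^ (2:ℝ) = G t ^ 2 := by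
    intro t
    rw [show (2:ℝ) = ((2:ℕ):ℝ) by norm_num, Real.rpow_natCast, sq_abs]
  have hA : A ≤ (∫ t in Ω, G t ^ 2) ^ ((1:ℝ)/2) * (b - a) ^ ((1:ℝ)/2) := by
    have h1 : ∫ t in Ω, |G t| * 1 = A := by simp [hAdef]
    have h2 : ∫ t in Ω, |G t| ^ (2:ℝ) = ∫ t in Ω, G t ^ 2 :=
      integral_congr_ae (Filter.Eventually.of_forall fun t => hsq t)
    have h3 : ∫ _t in Ω, (1:ℝ) ^ (2:ℝ) = b - a := by
      simp [Real.one_rpow, measureReal_def, hvol]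
    rw [h1, h2, h3] at hCS
    exact hCS
  -- relate to the statement's integrand
  have hS2eq : ∫ t in Ω, G t ^ 2 = ∫ x in Ω, (deriv φ x) ^ 2 / (φ x) ^ 2 :=
    setIntegral_congr_fun measurableSet_Ioo (fun t ht => by rw [hGeq t ht, div_pow])
  have hS2nonneg : 0 ≤ ∫ x in Ω, (deriv φ x) ^ 2 / (φ x) ^ 2 :=
    integral_nonneg (fun x => div_nonneg (sq_nonneg _) (sq_nonneg _))
  set S : ℝ := (∫ x in Ω, (deriv φ x) ^ 2 / (φ x) ^ 2) ^ ((1:ℝ)/2) with hSdef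
  have hSnonneg : 0 ≤ S := Real.rpow_nonneg hS2nonneg _
  have hA' : A ≤ S * (b - a) ^ ((1:ℝ)/2) := by
    rw [hSdef, ← hS2eq]; exact hA
  -- integrate the pointwise bound
  have hlogint : IntegrableOn (fun x => Real.log (φ x)) Ω :=
    ((ContinuousOn.log hφ.continuousOn
      (fun x hx => (hpos x hx).ne')).integrableOn_Icc).mono_set Set.Ioo_subset_Icc_self
  have hstep : (b - a) * Real.log (φ x₀) - (∫ x in Ω, Real.log (φ x)) ≤ (b - a) * A := by
    have h1 : ∫ x in Ω, (Real.log (φ x₀) - Real.log (φ x)) ≤ ∫ _x in Ω, A :=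
      setIntegral_mono_on ((hconst _).sub hlogint) (hconst _) measurableSet_Ioo hAbound
    rw [integral_sub (hconst _) hlogint, setIntegral_const, setIntegral_const,
      measureReal_def, hvol, smul_eq_mul, smul_eq_mul] at h1
    exact h1
  -- log inequality
  have hlogI : Real.log I ≤ Real.log (b - a) + Real.log (φ x₀) := by
    calc Real.log I ≤ Real.log ((b - a) * φ x₀) := Real.log_le_log hIpos hIle
      _ = Real.log (b - a) + Real.log (φ x₀) := Real.log_mul hL.ne' hφx₀.ne'
  -- rpow arithmetic
  have hrpow : (b - a) ^ ((3:ℝ)/2) = (b - a) * (b - a) ^ ((1:ℝ)/2) := by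
    rw [show (3:ℝ)/2 = 1 + 1/2 by norm_num, Real.rpow_add hL, Real.rpow_one]
  -- put everything together
  have h4 : (b - a) * A ≤ (b - a) ^ ((3:ℝ)/2) * S := by
    rw [hrpow]
    calc (b - a) * A ≤ (b - a) * (S * (b - a) ^ ((1:ℝ)/2)) :=
          mul_le_mul_of_nonneg_left hA' hL.le
      _ = (b - a) * (b - a) ^ ((1:ℝ)/2) * S := by ring
  have h5 : (b - a) * (Real.log I - Real.log (b - a)) ≤ (b - a) * Real.log (φ x₀) :=
    mul_le_mul_of_nonneg_left (by linarith) hL.le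
  linarith
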